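/- Let K be a nonempty compact subset of ℝ^n and let U be a bounded open neighborhood of K in ℝ^n. Then there exist a real polynomial function P : ℝ^n → ℝ with P(x) ≥ 0 for all x ∈ ℝ^n and real numbers 0 < ε₁ < ε₂ such that: P(x) < ε₁ for all x ∈ K; P(x) > ε₂ for all x in the frontier of U; and the gradient of P is nonzero at every point x ∈ ℝ^n with P(x) = ε₁ or P(x) = ε₂ (that is, 0 is a regular value of both P − ε₁ and P − ε₂). -/

import Mathlib

open MvPolynomial Metric Set Finset

private theorem mv_hasFDerivAt {n : ℕ} (p : MvPolynomial (Fin n) ℝ) (x : Fin n → ℝ) :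
    HasFDerivAt (fun y => eval y p)
      (∑ i : Fin n, eval x (pderiv i p) •
        ContinuousLinearMap.proj (R := ℝ) (φ := fun _ : Fin n => ℝ) i) x := by
  induction p using MvPolynomial.induction_on with
  | C a =>
      simp only [eval_C, pderiv_C, map_zero, zero_smul, Finset.sum_const_zero]
      exact hasFDerivAt_const a x
  | add p q hp hq =>
      simp only [map_add, add_smul, Finset.sum_add_distrib]
      exact hp.add hq
  | mul_X p i hp =>
      have h2 : HasFDerivAt (fun y : Fin n → ℝ => y i)
          (ContinuousLinearMap.proj (R := ℝ) (φ := fun _ : Fin n => ℝ) i) x :=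
        hasFDerivAt_apply i x
      have H := hp.mul h2
      have hfun : (fun y => eval y (p * X i)) = fun y => eval y p * y i := by
        funext y; simp
      rw [hfun]
      refine H.congr_fderiv ?_
      symm
      apply ContinuousLinearMap.ext; intro v
      simp only [ContinuousLinearMap.add_apply, ContinuousLinearMap.smul_apply,
        ContinuousLinearMap.coe_sum', Finset.sum_apply, ContinuousLinearMap.proj_apply,
        smul_eq_mul]
      simp only [pderiv_mul, map_add, map_mul, eval_X, pderiv_X, Pi.single_apply,
        apply_ite (eval x), map_zero, map_one, mul_ite, ite_mul, mul_one, one_mul,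
        mul_zero, zero_mul, add_mul, Finset.sum_add_distrib, Finset.sum_ite_eq,
        Finset.sum_ite_eq', Finset.mem_univ, if_true, Finset.mul_sum]
      rw [add_comm]
      congr 1
      exact Finset.sum_congr rfl fun j _ => by ring

private theorem mv_contDiff {n : ℕ} (p : MvPolynomial (Fin n) ℝ) :
    ContDiff ℝ 1 (fun y : Fin n → ℝ => eval y p) := by
  induction p using MvPolynomial.induction_on with
  | C a => simpa using contDiff_const (c := a)
  | add p q hp hq => simpa [map_add] using hp.add hq
  | mul_X p i hp =>
      have h2 : ContDiff ℝ 1 (fun y : Fin n → ℝ => y i) :=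
        (ContinuousLinearMap.proj (R := ℝ) (φ := fun _ : Fin n => ℝ) i).contDiff
      simpa [map_mul] using hp.mul h2

private theorem mv_components_zero {n : ℕ} (p : MvPolynomial (Fin n) ℝ) (x : Fin n → ℝ)
    (h : fderiv ℝ (fun y => eval y p) x = 0) (i : Fin n) : eval x (pderiv i p) = 0 := by
  have h1 := (mv_hasFDerivAt p x).fderiv
  rw [h] at h1
  have h2 := congrFun (congrArg (DFunLike.coe) h1) (Pi.single i 1)
  simpa [ContinuousLinearMap.coe_sum', Finset.sum_apply, Pi.single_apply, mul_ite,
    Finset.sum_ite_eq', Finset.mem_univ] using h2.symm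

private noncomputable def hessM {n : ℕ} (p : MvPolynomial (Fin n) ℝ) (x : Fin n → ℝ) :
    Matrix (Fin n) (Fin n) ℝ := Matrix.of fun i j => eval x (pderiv j (pderiv i p))

private theorem grad_hasFDerivAt {n : ℕ} (p : MvPolynomial (Fin n) ℝ) (x : Fin n → ℝ) :
    HasFDerivAt (fun y (i : Fin n) => eval y (pderiv i p))
      (LinearMap.toContinuousLinearMap (Matrix.toLin' (hessM p x))) x := by
  have h2 := hasFDerivAt_pi.mpr (fun i => mv_hasFDerivAt (pderiv i p) x)
  refine h2.congr_fderiv ?_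
  symm
  apply ContinuousLinearMap.ext; intro v
  funext i
  simp [Matrix.toLin'_apply, Matrix.mulVec, dotProduct, hessM]

private theorem grad_clm_det {n : ℕ} (p : MvPolynomial (Fin n) ℝ) (x : Fin n → ℝ) :
    (LinearMap.toContinuousLinearMap (Matrix.toLin' (hessM p x))).det = (hessM p x).det := by
  have : ((LinearMap.toContinuousLinearMap (Matrix.toLin' (hessM p x))) :
      (Fin n → ℝ) →ₗ[ℝ] (Fin n → ℝ)) = Matrix.toLin' (hessM p x) :=
    LinearMap.coe_toContinuousLinearMap _
  rw [ContinuousLinearMap.det, this, LinearMap.det_toLin']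

private theorem loc_inj {n : ℕ} (p : MvPolynomial (Fin n) ℝ) (x : Fin n → ℝ)
    (hdet : (hessM p x).det ≠ 0) :
    ∃ O : Set (Fin n → ℝ), IsOpen O ∧ x ∈ O ∧
      Set.InjOn (fun y (i : Fin n) => eval y (pderiv i p)) O := by
  set G := fun y (i : Fin n) => eval y (pderiv i p) with hG
  have hcd : ContDiff ℝ 1 G := contDiff_pi.mpr fun i => mv_contDiff (pderiv i p)
  haveI hinv := (hessM p x).invertibleOfIsUnitDet (isUnit_iff_ne_zero.mpr hdet)
  set e := ((hessM p x).toLinearEquiv' hinv).toContinuousLinearEquiv with he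
  have hstrict : HasStrictFDerivAt G (e : (Fin n → ℝ) →L[ℝ] (Fin n → ℝ)) x := by
    have h0 := (hcd.contDiffAt (x := x)).hasStrictFDerivAt one_ne_zero
    have h1 : fderiv ℝ G x = (e : (Fin n → ℝ) →L[ℝ] (Fin n → ℝ)) := by
      rw [(grad_hasFDerivAt p x).fderiv]
      apply ContinuousLinearMap.ext; intro v
      simp only [he, LinearEquiv.coe_toContinuousLinearEquiv', Matrix.toLinearEquiv'_apply,
        LinearMap.coe_toContinuousLinearMap', Matrix.toLin'_apply]
      rfl
    rwa [h1] at h0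
  set φ := HasStrictFDerivAt.toOpenPartialHomeomorph G hstrict with hφ
  refine ⟨φ.source, φ.open_source, HasStrictFDerivAt.mem_toOpenPartialHomeomorph_source hstrict, ?_⟩
  have h3 : Set.InjOn φ φ.source := φ.injOn
  rwa [HasStrictFDerivAt.toOpenPartialHomeomorph_coe hstrict] at h3

private theorem countable_of_isolated' {α : Type*} [TopologicalSpace α]
    [SecondCountableTopology α] {s : Set α}
    (h : ∀ x ∈ s, ∃ O : Set α, IsOpen O ∧ O ∩ s = {x}) : s.Countable := by
  haveI : DiscreteTopology s := by
    rw [discreteTopology_iff_isOpen_singleton]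
    rintro ⟨x, hx⟩
    obtain ⟨O, hO, hOs⟩ := h x hx
    have : ({⟨x, hx⟩} : Set s) = Subtype.val ⁻¹' O := by
      ext ⟨y, hy⟩
      simp only [Set.mem_singleton_iff, Set.mem_preimage, Subtype.mk.injEq]
      constructor
      · intro hyx
        have hxO : x ∈ O ∩ s := by rw [hOs]; exact Set.mem_singleton x
        rw [hyx]
        exact hxO.1
      · intro hyO
        have : y ∈ O ∩ s := ⟨hyO, hy⟩
        rw [hOs] at this
        exact Set.mem_singleton_iff.mp this
    rw [this]
    exact hO.preimage continuous_subtype_val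
  haveI : TopologicalSpace.SeparableSpace s := inferInstance
  rw [← Set.countable_coe_iff]
  exact (TopologicalSpace.separableSpace_iff_countable).mp ‹_›

private theorem exists_between_notMem' {B : Set ℝ} (hB : B.Countable) {a b : ℝ} (hab : a < b) :
    ∃ ε : ℝ, a < ε ∧ ε < b ∧ ε ∉ B := by
  have h1 : ¬ (Set.Ioo a b ⊆ B) := by
    intro h
    have h2 := MeasureTheory.measure_mono (μ := MeasureTheory.volume) h
    rw [hB.measure_zero] at h2
    simp [Real.volume_Ioo, ENNReal.ofReal_eq_zero, sub_nonpos] at h2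
    linarith
  obtain ⟨ε, hε, hεB⟩ := Set.not_subset.mp h1
  exact ⟨ε, hε.1, hε.2, hεB⟩

private theorem poly_approx {n : ℕ} (T : Set (Fin n → ℝ)) (hT : IsCompact T)
    (f : (Fin n → ℝ) → ℝ) (hf : Continuous f) {η : ℝ} (hη : 0 < η) :
    ∃ q : MvPolynomial (Fin n) ℝ, ∀ z ∈ T, |eval z q - f z| < η := by
  haveI : CompactSpace T := isCompact_iff_compactSpace.mp hT
  set coords : Fin n → C(T, ℝ) := fun i =>
    ⟨fun z => (z : Fin n → ℝ) i, (continuous_apply i).comp continuous_subtype_val⟩ with hcoords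
  set A := Algebra.adjoin ℝ (Set.range coords) with hA
  have sep : A.SeparatesPoints := by
    intro z w hzw
    have hne : (z : Fin n → ℝ) ≠ (w : Fin n → ℝ) := fun h => hzw (Subtype.ext h)
    obtain ⟨i, hi⟩ := Function.ne_iff.mp hne
    exact ⟨coords i, ⟨coords i, Algebra.subset_adjoin (mem_range_self i), rfl⟩, hi⟩
  obtain ⟨⟨g, hgA⟩, hg⟩ :=
    ContinuousMap.exists_mem_subalgebra_near_continuous_of_separatesPoints A sep
      (fun z : T => f z) (hf.comp continuous_subtype_val) η hη
  have key : ∀ (g : C(T, ℝ)), g ∈ A → ∃ q : MvPolynomial (Fin n) ℝ,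
      ∀ z : T, g z = eval (z : Fin n → ℝ) q := by
    intro g hgA
    induction hgA using Algebra.adjoin_induction with
    | mem x hx =>
        obtain ⟨i, rfl⟩ := hx
        exact ⟨X i, fun z => by simp [hcoords]⟩
    | algebraMap r => exact ⟨C r, fun z => by simp⟩
    | add x y hx hy ihx ihy =>
        obtain ⟨q1, h1⟩ := ihx; obtain ⟨q2, h2⟩ := ihy
        exact ⟨q1 + q2, fun z => by simp [h1 z, h2 z]⟩
    | mul x y hx hy ihx ihy =>
        obtain ⟨q1, h1⟩ := ihx; obtain ⟨q2, h2⟩ := ihy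
        exact ⟨q1 * q2, fun z => by simp [h1 z, h2 z]⟩
  obtain ⟨q, hq⟩ := key g hgA
  refine ⟨q, fun z hz => ?_⟩
  have := hg ⟨z, hz⟩
  rw [hq ⟨z, hz⟩] at this
  simpa [Real.norm_eq_abs] using this

set_option maxHeartbeats 1000000 in
/-- For a nonempty compact `K ⊆ ℝⁿ` and a bounded open neighborhood `U` of
`K`, there are a nonnegative polynomial function `P` and reals `0 < ε₁ < ε₂` with `P < ε₁`
on `K`, `P > ε₂` on the frontier of `U`, and `0` a regular value of both `P - ε₁` and
`P - ε₂` (the gradient of `P` is nonzero wherever `P = ε₁` or `P = ε₂`). -/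
theorem stmt7 (n : ℕ) (K : Set (Fin n → ℝ)) (hK : IsCompact K) (hKne : K.Nonempty)
    (U : Set (Fin n → ℝ)) (hUo : IsOpen U) (hUb : Bornology.IsBounded U) (hKU : K ⊆ U) :
    ∃ (P : MvPolynomial (Fin n) ℝ) (ε₁ ε₂ : ℝ),
      0 < ε₁ ∧ ε₁ < ε₂ ∧
      (∀ x : Fin n → ℝ, 0 ≤ MvPolynomial.eval x P) ∧
      (∀ x ∈ K, MvPolynomial.eval x P < ε₁) ∧
      (∀ x ∈ frontier U, ε₂ < MvPolynomial.eval x P) ∧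
      (∀ x : Fin n → ℝ, MvPolynomial.eval x P = ε₁ ∨ MvPolynomial.eval x P = ε₂ →
        fderiv ℝ (fun y => MvPolynomial.eval y P) x ≠ 0) := by
  classical
  -- the compact set on which we approximate
  set T : Set (Fin n → ℝ) := closure U with hT
  have hTc : IsCompact T := hUb.isCompact_closure
  have hKT : K ⊆ T := hKU.trans subset_closure
  have hFT : frontier U ⊆ T := frontier_subset_closure
  -- a positive distance
  obtain ⟨δ, δpos, hδ⟩ := hK.exists_thickening_subset_open hUo hKU
  -- bound on T
  obtain ⟨Cb, hCb⟩ := (isBounded_iff_forall_norm_le).mp hUb.closure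
  set ρ : ℝ := max Cb 0 with hρdef
  have hρ0 : 0 ≤ ρ := le_max_right _ _
  have hρ : ∀ z ∈ T, ‖z‖ ≤ ρ := fun z hz => (hCb z hz).trans (le_max_left _ _)
  -- approximation of the distance function
  obtain ⟨Q, hQ⟩ := poly_approx T hTc (fun z => infDist z K)
    (continuous_infDist_pt K) (show (0:ℝ) < δ/8 by linarith)
  -- pick a small regular linear perturbation using Sard's lemma in equal dimension
  set GQ : (Fin n → ℝ) → (Fin n → ℝ) := fun y i => eval y (pderiv i Q) with hGQ
  set S : Set (Fin n → ℝ) := {x | (hessM Q x).det = 0} with hS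
  have hnull : MeasureTheory.volume (GQ '' S) = 0 := by
    apply MeasureTheory.addHaar_image_eq_zero_of_det_fderivWithin_eq_zero
      (f' := fun x => LinearMap.toContinuousLinearMap (Matrix.toLin' (hessM Q x)))
    · exact fun x _ => (grad_hasFDerivAt Q x).hasFDerivWithinAt
    · intro x hx
      rw [grad_clm_det]
      exact hx
  set η : ℝ := δ / (8 * (n * ρ + 1)) with hηdef
  have hηpos : 0 < η := by
    apply div_pos δpos
    positivity
  obtain ⟨w, hwnorm, hwS⟩ : ∃ w : Fin n → ℝ, ‖w‖ < η ∧ w ∉ GQ '' S := by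
    have h1 : ¬ (Metric.ball (0 : Fin n → ℝ) η ⊆ GQ '' S) := by
      intro h
      have h2 := MeasureTheory.measure_mono (μ := MeasureTheory.volume) h
      rw [hnull] at h2
      have := Metric.measure_ball_pos MeasureTheory.volume (0 : Fin n → ℝ) hηpos
      exact absurd (le_antisymm h2 zero_le) (ne_of_gt this)
    obtain ⟨w, hw, hwN⟩ := Set.not_subset.mp h1
    exact ⟨w, by simpa using hw, hwN⟩
  set v : Fin n → ℝ := -w with hv
  -- the perturbed polynomial
  set Lin : MvPolynomial (Fin n) ℝ := ∑ i : Fin n, MvPolynomial.C (v i) * X i with hLin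
  set R : MvPolynomial (Fin n) ℝ := Q + Lin with hR
  have evalLin : ∀ z : Fin n → ℝ, eval z Lin = ∑ i : Fin n, v i * z i := by
    intro z; simp [hLin]
  have pderivLin : ∀ i : Fin n, pderiv i Lin = MvPolynomial.C (v i) := by
    intro i
    rw [hLin, map_sum]
    have : ∀ j : Fin n, pderiv i (MvPolynomial.C (v j) * X j) =
        if i = j then MvPolynomial.C (v j) else 0 := by
      intro j
      rw [pderiv_mul, pderiv_C]
      by_cases hij : i = j
      · subst hij; simp
      · simp [pderiv_X_of_ne (Ne.symm hij), hij]
    simp [this]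
  have evalpderivR : ∀ (i : Fin n) (z : Fin n → ℝ),
      eval z (pderiv i R) = eval z (pderiv i Q) + v i := by
    intro i z
    rw [hR, map_add, map_add, pderivLin i, eval_C]
  have hessR : ∀ x : Fin n → ℝ, hessM R x = hessM Q x := by
    intro x
    ext i j
    simp [hessM, hR, map_add, pderivLin i, pderiv_C]
  -- bound for the linear part on T
  have hlinbound : ∀ z ∈ T, |∑ i : Fin n, v i * z i| ≤ δ/8 := by
    intro z hz
    calc |∑ i : Fin n, v i * z i| ≤ ∑ i : Fin n, |v i * z i| :=
          Finset.abs_sum_le_sum_abs _ _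
      _ ≤ ∑ _i : Fin n, η * ρ := by
          apply Finset.sum_le_sum
          intro i _
          rw [abs_mul]
          have h1 : |v i| ≤ η := by
            have := norm_le_pi_norm v i
            simp only [Real.norm_eq_abs] at this
            have hn : ‖v‖ = ‖w‖ := by rw [hv, norm_neg]
            calc |v i| ≤ ‖v‖ := this
              _ = ‖w‖ := hn
              _ ≤ η := hwnorm.le
          have h2 : |z i| ≤ ρ := by
            have := norm_le_pi_norm z i
            simp only [Real.norm_eq_abs] at this
            exact this.trans (hρ z hz)
          exact mul_le_mul h1 h2 (abs_nonneg _) (le_trans (abs_nonneg _) h1)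
      _ = n * η * ρ := by simp [Finset.sum_const]; ring
      _ ≤ δ/8 := by
          rw [hηdef]
          have h8 : (0:ℝ) < 8 * ((n:ℝ) * ρ + 1) := by positivity
          calc (n:ℝ) * (δ / (8 * ((n:ℝ) * ρ + 1))) * ρ
              = δ * ((n:ℝ) * ρ) / (8 * ((n:ℝ) * ρ + 1)) := by ring
            _ ≤ δ/8 := by
                rw [div_le_div_iff₀ h8 (by norm_num)]
                nlinarith [mul_nonneg (Nat.cast_nonneg (α := ℝ) n) hρ0, δpos.le]
  -- values of R on K and on the frontier
  have hRK : ∀ z ∈ K, |eval z R| < δ/4 := by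
    intro z hz
    have h1 := hQ z (hKT hz)
    rw [infDist_zero_of_mem hz] at h1
    have h2 := hlinbound z (hKT hz)
    have : eval z R = eval z Q + ∑ i : Fin n, v i * z i := by
      rw [hR, map_add, evalLin]
    rw [this]
    calc |eval z Q + ∑ i : Fin n, v i * z i| ≤ |eval z Q| + |∑ i : Fin n, v i * z i| :=
        abs_add_le _ _
      _ < δ/4 := by
          simp only [sub_zero] at h1
          linarith
  have hRF : ∀ z ∈ frontier U, 3*δ/4 < eval z R := by
    intro z hz
    have hzT : z ∈ T := hFT hz
    have hznU : z ∉ U := by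
      rw [hUo.frontier_eq] at hz
      exact hz.2
    have hdist : δ ≤ infDist z K := by
      by_contra h
      push_neg at h
      exact hznU (hδ ((mem_thickening_iff_infDist_lt hKne).mpr h))
    have h1 := hQ z hzT
    have h2 := hlinbound z hzT
    have h3 : eval z R = eval z Q + ∑ i : Fin n, v i * z i := by
      rw [hR, map_add, evalLin]
    rw [h3]
    have h4 : eval z Q > infDist z K - δ/8 := by
      have := abs_lt.mp h1
      linarith [this.1]
    have h5 : (∑ i : Fin n, v i * z i) ≥ -(δ/8) := by
      have := abs_le.mp h2
      linarith [this.1]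
    linarith
  -- the critical set of R is countable
  set crit : Set (Fin n → ℝ) := {x | ∀ i, eval x (pderiv i R) = 0} with hcrit
  have hcritdet : ∀ x ∈ crit, (hessM R x).det ≠ 0 := by
    intro x hx
    rw [hessR]
    intro hdet
    apply hwS
    refine ⟨x, hdet, ?_⟩
    funext i
    have := hx i
    rw [evalpderivR] at this
    have : eval x (pderiv i Q) = -v i := by linarith
    rw [hGQ]; simp only []
    rw [this, hv]
    simp
  have hcritcount : crit.Countable := by
    apply countable_of_isolated'
    intro x hx
    obtain ⟨O, hOopen, hxO, hOinj⟩ := loc_inj R x (hcritdet x hx)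
    refine ⟨O, hOopen, ?_⟩
    apply Set.eq_singleton_iff_unique_mem.mpr
    constructor
    · exact ⟨hxO, hx⟩
    · rintro y ⟨hyO, hycrit⟩
      apply hOinj hyO hxO
      funext i
      show eval y (pderiv i R) = eval x (pderiv i R)
      rw [hycrit i, hx i]
  -- the bad set of values
  set B : Set ℝ := (fun t : ℝ => t * t) '' ((fun z => eval z R) '' crit) with hB
  have hBcount : B.Countable := (hcritcount.image _).image _
  -- choose the two regular values
  have hab : (δ/4) * (δ/4) < (3*δ/4) * (3*δ/4) := by nlinarith
  obtain ⟨ε₁, hε₁a, hε₁b, hε₁B⟩ := exists_between_notMem' hBcount hab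
  obtain ⟨ε₂, hε₂a, hε₂b, hε₂B⟩ := exists_between_notMem' hBcount hε₁b
  refine ⟨R * R, ε₁, ε₂, ?_, hε₂a, ?_, ?_, ?_, ?_⟩
  · nlinarith
  · intro x
    rw [map_mul]
    exact mul_self_nonneg _
  · intro z hz
    rw [map_mul]
    have h1 := hRK z hz
    calc eval z R * eval z R = |eval z R| * |eval z R| := (abs_mul_abs_self _).symm
      _ < (δ/4) * (δ/4) := by nlinarith [abs_nonneg (eval z R)]
      _ < ε₁ := hε₁a
  · intro z hz
    rw [map_mul]
    have h1 := hRF z hz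
    have h2 : 0 < 3*δ/4 := by linarith
    calc ε₂ < (3*δ/4) * (3*δ/4) := hε₂b
      _ < eval z R * eval z R := by nlinarith
  · intro x hx hfd
    have hcomp : ∀ i, eval x (pderiv i (R * R)) = 0 := mv_components_zero (R * R) x hfd
    have hval : eval x (R * R) = eval x R * eval x R := map_mul _ _ _
    have hRx : eval x R ≠ 0 := by
      intro h0
      rcases hx with h | h <;> rw [hval, h0, mul_zero] at h
      · nlinarith
      · nlinarith
    have hxcrit : x ∈ crit := by
      intro i
      have := hcomp i
      rw [pderiv_mul, map_add, map_mul, map_mul,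
        mul_comm (eval x (pderiv i R)) (eval x R)] at this
      have h3 : eval x R * eval x (pderiv i R) = 0 := by linarith
      rcases mul_eq_zero.mp h3 with h | h
      · exact absurd h hRx
      · exact h
    have : eval x (R * R) ∈ B := by
      rw [hval]
      exact ⟨eval x R, ⟨x, hxcrit, rfl⟩, rfl⟩
    rcases hx with h | h
    · rw [h] at this; exact hε₁B this
    · rw [h] at this; exact hε₂B this
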